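/- Let k be a field with char k = 0 or char k > 3, and let f = a·x₁³ + b·x₁²x₂ + c·x₁x₂² + e·x₂³ be a nondegenerate binary cubic form over k. Then dim_k Z(f) = 2. In particular, no nondegenerate binary cubic form is central. -/
import Mathlib


open MvPolynomial Matrix

/-- The Hessian matrix of a multivariate polynomial. -/
noncomputable def hessian {k : Type*} [Field k] {σ : Type*} (f : MvPolynomial σ k) :
    Matrix σ σ (MvPolynomial σ k) :=
  Matrix.of fun i j => pderiv i (pderiv j f)

/-- The center of a form `f`. -/
def center {k : Type*} [Field k] {σ : Type*} [Fintype σ] (f : MvPolynomial σ k) :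
    Set (Matrix σ σ k) :=
  {X | (hessian f * X.map (C : k → MvPolynomial σ k))ᵀ
        = hessian f * X.map (C : k → MvPolynomial σ k)}

/-- The center of a form `f`, as a `k`-subspace of the matrix algebra. -/
noncomputable def centerSubmodule {k : Type*} [Field k] {σ : Type*} [Fintype σ]
    (f : MvPolynomial σ k) : Submodule k (Matrix σ σ k) where
  carrier := center f
  add_mem' := by
    intro X Y hX hY
    have hmap : (X + Y).map (C : k → MvPolynomial σ k) = X.map C + Y.map C := by
      ext i j; simp [Matrix.map_apply]
    simp only [center, Set.mem_setOf_eq] at *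
    rw [hmap, Matrix.mul_add, Matrix.transpose_add, hX, hY]
  zero_mem' := by
    have hmap : (0 : Matrix σ σ k).map (C : k → MvPolynomial σ k) = 0 := by
      ext i j; simp [Matrix.map_apply]
    simp only [center, Set.mem_setOf_eq]
    rw [hmap, Matrix.mul_zero, Matrix.transpose_zero]
  smul_mem' := by
    intro c X hX
    have hmap : (c • X).map (C : k → MvPolynomial σ k)
        = (C c : MvPolynomial σ k) • X.map C := by
      ext i j; simp [Matrix.map_apply, smul_eq_mul]
    simp only [center, Set.mem_setOf_eq] at *
    rw [hmap, Matrix.mul_smul, Matrix.transpose_smul, hX]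


private lemma mat2_ext {R : Type*} {A B : Matrix (Fin 2) (Fin 2) R}
    (e00 : A 0 0 = B 0 0) (e01 : A 0 1 = B 0 1)
    (e10 : A 1 0 = B 1 0) (e11 : A 1 1 = B 1 1) : A = B := by
  funext i j
  fin_cases i <;> fin_cases j <;> assumption

private lemma lin_coeff_eq' {k : Type*} [Field k] {α β α' β' : k}
    (h : C α * X 0 + C β * X 1 = (C α' * X 0 + C β' * X 1 : MvPolynomial (Fin 2) k)) :
    α = α' ∧ β = β' := by
  constructor
  · have := congrArg (eval ![(1:k), 0]) h
    simpa using this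
  · have := congrArg (eval ![(0:k), 1]) h
    simpa using this

set_option maxHeartbeats 1600000 in
/-- every nondegenerate binary cubic form has a 2-dimensional center;
in particular no nondegenerate binary cubic is central. -/
theorem binary_cubic_center_dim_two {k : Type*} [Field k]
    (hchar : ringChar k = 0 ∨ 3 < ringChar k) (a b c e : k)
    (f : MvPolynomial (Fin 2) k)
    (hf : f = C a * X 0 ^ 3 + C b * X 0 ^ 2 * X 1 + C c * X 0 * X 1 ^ 2 + C e * X 1 ^ 3)
    (hnd : LinearIndependent k fun i : Fin 2 => pderiv i f) :
    Module.finrank k (centerSubmodule f) = 2 ∧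
      center f ≠ Set.range (fun lam : k => lam • (1 : Matrix (Fin 2) (Fin 2) k)) := by
  have h2 : (2:k) ≠ 0 := by
    have : ((2:ℕ):k) ≠ 0 := by
      intro h
      have hd : ringChar k ∣ 2 := (CharP.cast_eq_zero_iff k (ringChar k) 2).mp h
      rcases hchar with h0 | h4
      · rw [h0, zero_dvd_iff] at hd; omega
      · have := Nat.le_of_dvd (by norm_num) hd; omega
    simpa using this
  have hd0 : pderiv 0 f = C (3*a) * X 0 ^ 2 + C (2*b) * (X 0 * X 1) + C c * X 1 ^ 2 := by
    subst hf
    simp [pderiv_mul, pderiv_X_self, pderiv_X_of_ne, pderiv_pow, map_ofNat]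
    ring
  have hd1 : pderiv 1 f = C b * X 0 ^ 2 + C (2*c) * (X 0 * X 1) + C (3*e) * X 1 ^ 2 := by
    subst hf
    simp [pderiv_mul, pderiv_X_self, pderiv_X_of_ne, pderiv_pow, map_ofNat]
    ring
  have h00 : hessian f 0 0 = C (6*a) * X 0 + C (2*b) * X 1 := by
    show pderiv 0 (pderiv 0 f) = _
    rw [hd0]
    simp [pderiv_C_mul, pderiv_mul, pderiv_X_self, pderiv_X_of_ne, pderiv_pow]
    simp [C_mul, map_ofNat]
    ring
  have h01 : hessian f 0 1 = C (2*b) * X 0 + C (2*c) * X 1 := by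
    show pderiv 0 (pderiv 1 f) = _
    rw [hd1]
    simp [pderiv_C_mul, pderiv_mul, pderiv_X_self, pderiv_X_of_ne, pderiv_pow]
    simp [C_mul, map_ofNat]
    ring
  have h10 : hessian f 1 0 = C (2*b) * X 0 + C (2*c) * X 1 := by
    show pderiv 1 (pderiv 0 f) = _
    rw [hd0]
    simp [pderiv_C_mul, pderiv_mul, pderiv_X_self, pderiv_X_of_ne, pderiv_pow]
    simp [C_mul, map_ofNat]
    ring
  have h11 : hessian f 1 1 = C (2*c) * X 0 + C (6*e) * X 1 := by
    show pderiv 1 (pderiv 1 f) = _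
    rw [hd1]
    simp [pderiv_C_mul, pderiv_mul, pderiv_X_self, pderiv_X_of_ne, pderiv_pow]
    simp [C_mul, map_ofNat]
    ring
  have e01 : ∀ M : Matrix (Fin 2) (Fin 2) k,
      (hessian f * M.map (C : k → MvPolynomial (Fin 2) k)) 0 1
        = C (6*a*M 0 1 + 2*b*M 1 1) * X 0 + C (2*b*M 0 1 + 2*c*M 1 1) * X 1 := by
    intro M
    rw [Matrix.mul_apply, Fin.sum_univ_two]
    simp only [Matrix.map_apply]
    rw [h00, h01]
    simp only [C_add, C_mul]
    ring
  have e10 : ∀ M : Matrix (Fin 2) (Fin 2) k,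
      (hessian f * M.map (C : k → MvPolynomial (Fin 2) k)) 1 0
        = C (2*b*M 0 0 + 2*c*M 1 0) * X 0 + C (2*c*M 0 0 + 6*e*M 1 0) * X 1 := by
    intro M
    rw [Matrix.mul_apply, Fin.sum_univ_two]
    simp only [Matrix.map_apply]
    rw [h10, h11]
    simp only [C_add, C_mul]
    ring
  have hmem : ∀ M : Matrix (Fin 2) (Fin 2) k, M ∈ center f ↔
      (3*a*M 0 1 + b*(M 1 1 - M 0 0) - c*M 1 0 = 0 ∧
       b*M 0 1 + c*(M 1 1 - M 0 0) - 3*e*M 1 0 = 0) := by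
    intro M
    constructor
    · intro h
      have h' : (hessian f * M.map (C : k → MvPolynomial (Fin 2) k)) 1 0
          = (hessian f * M.map (C : k → MvPolynomial (Fin 2) k)) 0 1 :=
        congrFun (congrFun h 0) 1
      rw [e01 M, e10 M] at h'
      obtain ⟨k1, k2⟩ := lin_coeff_eq' h'
      constructor
      · have : 2 * (3*a*M 0 1 + b*(M 1 1 - M 0 0) - c*M 1 0) = 0 := by
          linear_combination -k1
        exact (mul_eq_zero.mp this).resolve_left h2
      · have : 2 * (b*M 0 1 + c*(M 1 1 - M 0 0) - 3*e*M 1 0) = 0 := by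
          linear_combination -k2
        exact (mul_eq_zero.mp this).resolve_left h2
    · rintro ⟨k1, k2⟩
      have k1' : 2*b*M 0 0 + 2*c*M 1 0 = 6*a*M 0 1 + 2*b*M 1 1 := by
        linear_combination -2 * k1
      have k2' : 2*c*M 0 0 + 6*e*M 1 0 = 2*b*M 0 1 + 2*c*M 1 1 := by
        linear_combination -2 * k2
      refine mat2_ext rfl ?_ ?_ rfl
      · show (hessian f * M.map (C : k → MvPolynomial (Fin 2) k)) 1 0 = _
        rw [e01 M, e10 M, k1', k2']
      · show (hessian f * M.map (C : k → MvPolynomial (Fin 2) k)) 0 1 = _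
        rw [e01 M, e10 M, k1', k2']
  -- the linear algebra part
  set N : Matrix (Fin 2) (Fin 3) k := !![3*a, b, -c; b, c, -(3*e)] with hN
  have hNv : ∀ w : Fin 3 → k, N.mulVec w
      = ![3*a*w 0 + b*w 1 + -c*w 2, b*w 0 + c*w 1 + -(3*e)*w 2] := by
    intro w
    funext i
    fin_cases i <;>
      simp [hN, Matrix.mulVec, dotProduct, Fin.sum_univ_three]
  have hNTv : ∀ v : Fin 2 → k, Nᵀ.mulVec v
      = ![3*a*v 0 + b*v 1, b*v 0 + c*v 1, -(c*v 0 + 3*e*v 1)] := by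
    intro v
    funext i
    fin_cases i <;>
      simp [hN, Matrix.mulVec, dotProduct, Fin.sum_univ_two, Matrix.transpose_apply] <;>
      ring
  -- transpose is injective
  have hinj : Function.Injective Nᵀ.mulVecLin := by
    rw [← LinearMap.ker_eq_bot, LinearMap.ker_eq_bot']
    intro v hv
    rw [Matrix.mulVecLin_apply, hNTv v] at hv
    have hv0 : 3*a*v 0 + b*v 1 = 0 := by simpa using congrFun hv 0
    have hv1 : b*v 0 + c*v 1 = 0 := by simpa using congrFun hv 1
    have hv2 : c*v 0 + 3*e*v 1 = 0 := by
      have := congrFun hv 2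
      simp at this
      linear_combination -this
    have hsum : ∑ i : Fin 2, v i • pderiv i f = 0 := by
      rw [Fin.sum_univ_two, hd0, hd1, smul_eq_C_mul, smul_eq_C_mul]
      have E : C (v 0) * (C (3*a) * X 0 ^ 2 + C (2*b) * (X 0 * X 1) + C c * X 1 ^ 2)
            + C (v 1) * (C b * X 0 ^ 2 + C (2*c) * (X 0 * X 1) + C (3*e) * X 1 ^ 2)
          = C (3*a*v 0 + b*v 1) * X 0 ^ 2 + C (2*(b*v 0 + c*v 1)) * (X 0 * X 1)
            + C (c*v 0 + 3*e*v 1) * (X 1 ^ 2 : MvPolynomial (Fin 2) k) := by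
        simp only [C_add, C_mul, map_ofNat]
        ring
      rw [E, hv0, hv1, hv2]
      simp
    have hall := Fintype.linearIndependent_iff.mp hnd v hsum
    funext i
    exact hall i
  have hrank : N.rank = 2 := by
    rw [← Matrix.rank_transpose, Matrix.rank, LinearMap.finrank_range_of_inj hinj]
    simp
  have hrange : LinearMap.range N.mulVecLin = ⊤ := by
    apply Submodule.eq_top_of_finrank_eq
    rw [show Module.finrank k ↥(LinearMap.range N.mulVecLin) = N.rank from rfl, hrank]
    simp
  -- the linear map L
  set L : Matrix (Fin 2) (Fin 2) k →ₗ[k] (Fin 3 → k) :=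
    { toFun := fun M => ![M 0 1, M 1 1 - M 0 0, M 1 0]
      map_add' := by
        intro A B
        funext i
        fin_cases i <;> simp [Matrix.add_apply] <;> ring
      map_smul' := by
        intro r A
        funext i
        fin_cases i <;> simp [Matrix.smul_apply, smul_eq_mul] <;> ring } with hL
  have hLval : ∀ M : Matrix (Fin 2) (Fin 2) k, L M = ![M 0 1, M 1 1 - M 0 0, M 1 0] :=
    fun _ => rfl
  have hLsurj : Function.Surjective L := by
    intro v
    refine ⟨Matrix.of ![![0, v 0], ![v 2, v 1]], ?_⟩
    rw [hLval]
    funext i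
    fin_cases i <;> simp
  set φ : Matrix (Fin 2) (Fin 2) k →ₗ[k] (Fin 2 → k) := N.mulVecLin.comp L with hφ
  have hφval : ∀ M : Matrix (Fin 2) (Fin 2) k,
      φ M = ![3*a*M 0 1 + b*(M 1 1 - M 0 0) + -c*M 1 0,
              b*M 0 1 + c*(M 1 1 - M 0 0) + -(3*e)*M 1 0] := by
    intro M
    rw [hφ, LinearMap.comp_apply, Matrix.mulVecLin_apply, hLval, hNv]
    funext i
    fin_cases i <;> simp
  have hφsurj : Function.Surjective φ := by
    rw [hφ]
    exact (LinearMap.range_eq_top.mp hrange).comp hLsurj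
  have hker : centerSubmodule f = LinearMap.ker φ := by
    ext M
    have hmem' : M ∈ centerSubmodule f ↔ M ∈ center f := Iff.rfl
    rw [hmem', hmem M, LinearMap.mem_ker, hφval M]
    constructor
    · rintro ⟨k1, k2⟩
      funext i
      fin_cases i
      · simp
        linear_combination k1
      · simp
        linear_combination k2
    · intro h
      have h0 := congrFun h 0
      have h1 := congrFun h 1
      simp at h0 h1
      exact ⟨by linear_combination h0, by linear_combination h1⟩
  have hdim : Module.finrank k ↥(centerSubmodule f) = 2 := by
    rw [hker]
    have hrn := LinearMap.finrank_range_add_finrank_ker φ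
    have hr : Module.finrank k ↥(LinearMap.range φ) = 2 := by
      rw [LinearMap.range_eq_top.mpr hφsurj]
      simp
    have hdom : Module.finrank k (Matrix (Fin 2) (Fin 2) k) = 4 := by
      simp [Module.finrank_matrix]
    omega
  refine ⟨hdim, ?_⟩
  intro hcontra
  have hle : centerSubmodule f ≤ Submodule.span k {(1 : Matrix (Fin 2) (Fin 2) k)} := by
    intro M hM
    have hMc : M ∈ center f := hM
    rw [hcontra] at hMc
    obtain ⟨lam, hlam⟩ := hMc
    rw [Submodule.mem_span_singleton]
    exact ⟨lam, hlam⟩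
  have h1 : Module.finrank k ↥(Submodule.span k {(1 : Matrix (Fin 2) (Fin 2) k)}) = 1 :=
    finrank_span_singleton one_ne_zero
  have hmono := Submodule.finrank_mono hle
  omega
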